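/- Let Ω ⊂ ℝ^N be a bounded open set with smooth boundary, and let u ∈ C²(Ω̄) be complex-valued with u = 0 on ∂Ω, and let φ ∈ C²(Ω̄), σ ∈ C¹(Ω̄) be real-valued, s ∈ ℝ. Then Re ∫_Ω 2sσ² (∇φ·∇u) Δū dx = ∫_{∂Ω} sσ² (∂φ/∂ν) |∂u/∂ν|² dS − Re ∫_Ω 2s(∇σ²·∇ū)(∇φ·∇u) dx + ∫_Ω s(∇σ²·∇φ)|∇u|² dx + ∫_Ω sσ² Δφ |∇u|² dx − Re ∫_Ω 2sσ² Σ_{i,j} ∂_j∂_iφ ∂_iu ∂_jū dx. -/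

import Mathlib

open MeasureTheory

/-- Partial derivative of a complex-valued function on `ℝ^N` in the `i`-th coordinate. -/
noncomputable def pdC (N : ℕ) (f : EuclideanSpace ℝ (Fin N) → ℂ) (i : Fin N)
    (x : EuclideanSpace ℝ (Fin N)) : ℂ :=
  fderiv ℝ f x (EuclideanSpace.single i 1)

/-- Partial derivative of a real-valued function on `ℝ^N` in the `i`-th coordinate. -/
noncomputable def pdR (N : ℕ) (f : EuclideanSpace ℝ (Fin N) → ℝ) (i : Fin N)
    (x : EuclideanSpace ℝ (Fin N)) : ℝ :=
  fderiv ℝ f x (EuclideanSpace.single i 1)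

/-- `∇φ · ∇u` for real `φ` and complex `u`. -/
noncomputable def gradDotC (N : ℕ) (φ : EuclideanSpace ℝ (Fin N) → ℝ)
    (u : EuclideanSpace ℝ (Fin N) → ℂ) (x : EuclideanSpace ℝ (Fin N)) : ℂ :=
  ∑ i : Fin N, (pdR N φ i x : ℂ) * pdC N u i x

/-- Laplacian of a complex-valued function. -/
noncomputable def lapC (N : ℕ) (u : EuclideanSpace ℝ (Fin N) → ℂ)
    (x : EuclideanSpace ℝ (Fin N)) : ℂ :=
  ∑ i : Fin N, pdC N (pdC N u i) i x

/-- Laplacian of a real-valued function. -/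
noncomputable def lapR (N : ℕ) (φ : EuclideanSpace ℝ (Fin N) → ℝ)
    (x : EuclideanSpace ℝ (Fin N)) : ℝ :=
  ∑ i : Fin N, pdR N (pdR N φ i) i x

/-- `|∇u|²` for a complex-valued function `u`. -/
noncomputable def gradNormSqC (N : ℕ) (u : EuclideanSpace ℝ (Fin N) → ℂ)
    (x : EuclideanSpace ℝ (Fin N)) : ℝ :=
  ∑ i : Fin N, ‖pdC N u i x‖ ^ 2


set_option maxHeartbeats 1600000
namespace CarlemanAux
variable {N : ℕ}


variable {N : ℕ}

lemma contDiff_pdR {f : EuclideanSpace ℝ (Fin N) → ℝ} (hf : ContDiff ℝ 2 f) (i : Fin N) :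
    ContDiff ℝ 1 (pdR N f i) := by
  have h : pdR N f i
      = (ContinuousLinearMap.apply ℝ ℝ (EuclideanSpace.single i 1)) ∘ fderiv ℝ f := rfl
  rw [h]
  exact (ContinuousLinearMap.apply ℝ ℝ (EuclideanSpace.single i 1)).contDiff.comp
    (hf.fderiv_right (m := 1) (by norm_num))

lemma contDiff_pdC {f : EuclideanSpace ℝ (Fin N) → ℂ} (hf : ContDiff ℝ 2 f) (i : Fin N) :
    ContDiff ℝ 1 (pdC N f i) := by
  have h : pdC N f i
      = (ContinuousLinearMap.apply ℝ ℂ (EuclideanSpace.single i 1)) ∘ fderiv ℝ f := rfl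
  rw [h]
  exact (ContinuousLinearMap.apply ℝ ℂ (EuclideanSpace.single i 1)).contDiff.comp
    (hf.fderiv_right (m := 1) (by norm_num))

lemma continuous_pdR {f : EuclideanSpace ℝ (Fin N) → ℝ} (hf : ContDiff ℝ 1 f) (i : Fin N) :
    Continuous (pdR N f i) :=
  (ContinuousLinearMap.apply ℝ ℝ (EuclideanSpace.single i 1)).continuous.comp
    (hf.continuous_fderiv one_ne_zero)

lemma continuous_pdC {f : EuclideanSpace ℝ (Fin N) → ℂ} (hf : ContDiff ℝ 1 f) (i : Fin N) :
    Continuous (pdC N f i) :=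
  (ContinuousLinearMap.apply ℝ ℂ (EuclideanSpace.single i 1)).continuous.comp
    (hf.continuous_fderiv one_ne_zero)

lemma pdR_mul {f g : EuclideanSpace ℝ (Fin N) → ℝ} {x : EuclideanSpace ℝ (Fin N)}
    (hf : DifferentiableAt ℝ f x) (hg : DifferentiableAt ℝ g x) (i : Fin N) :
    pdR N (fun y => f y * g y) i x = pdR N f i x * g x + f x * pdR N g i x := by
  simp [pdR, fderiv_fun_mul hf hg]; ring

lemma pdR_const_mul {f : EuclideanSpace ℝ (Fin N) → ℝ} {x : EuclideanSpace ℝ (Fin N)}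
    (hf : DifferentiableAt ℝ f x) (c : ℝ) (i : Fin N) :
    pdR N (fun y => c * f y) i x = c * pdR N f i x := by
  simp [pdR, fderiv_const_mul hf c]

lemma pdR_sum {ι : Type*} (s : Finset ι) {f : ι → EuclideanSpace ℝ (Fin N) → ℝ}
    {x : EuclideanSpace ℝ (Fin N)} (hf : ∀ k ∈ s, DifferentiableAt ℝ (f k) x) (i : Fin N) :
    pdR N (fun y => ∑ k ∈ s, f k y) i x = ∑ k ∈ s, pdR N (f k) i x := by
  simp [pdR, fderiv_fun_sum hf]

lemma pdR_sub {f g : EuclideanSpace ℝ (Fin N) → ℝ} {x : EuclideanSpace ℝ (Fin N)}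
    (hf : DifferentiableAt ℝ f x) (hg : DifferentiableAt ℝ g x) (i : Fin N) :
    pdR N (fun y => f y - g y) i x = pdR N f i x - pdR N g i x := by
  simp [pdR, fderiv_fun_sub hf hg]

lemma pdR_clm_comp {F : Type*} [NormedAddCommGroup F] [NormedSpace ℝ F]
    {f : EuclideanSpace ℝ (Fin N) → F} {x : EuclideanSpace ℝ (Fin N)}
    (hf : DifferentiableAt ℝ f x) (L : F →L[ℝ] ℝ) (i : Fin N) :
    pdR N (fun y => L (f y)) i x = L (fderiv ℝ f x (EuclideanSpace.single i 1)) := by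
  have h2 := (L.hasFDerivAt.comp x hf.hasFDerivAt).fderiv
  have h3 : pdR N (fun y => L (f y)) i x
      = (fderiv ℝ (L ∘ f) x) (EuclideanSpace.single i 1) := rfl
  rw [h3, h2]; rfl

lemma pd_re {f : EuclideanSpace ℝ (Fin N) → ℂ} {x : EuclideanSpace ℝ (Fin N)}
    (hf : DifferentiableAt ℝ f x) (i : Fin N) :
    pdR N (fun y => (f y).re) i x = (pdC N f i x).re :=
  pdR_clm_comp hf Complex.reCLM i

lemma pd_im {f : EuclideanSpace ℝ (Fin N) → ℂ} {x : EuclideanSpace ℝ (Fin N)}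
    (hf : DifferentiableAt ℝ f x) (i : Fin N) :
    pdR N (fun y => (f y).im) i x = (pdC N f i x).im :=
  pdR_clm_comp hf Complex.imCLM i

lemma pdR_comm {f : EuclideanSpace ℝ (Fin N) → ℝ} (hf : ContDiff ℝ 2 f) (i j : Fin N)
    (x : EuclideanSpace ℝ (Fin N)) :
    pdR N (pdR N f i) j x = pdR N (pdR N f j) i x := by
  have hsymm := (hf.contDiffAt (x := x)).isSymmSndFDerivAt (by norm_num)
  have key : ∀ k l : Fin N, pdR N (pdR N f k) l x
      = (fderiv ℝ (fderiv ℝ f) x (EuclideanSpace.single l 1)) (EuclideanSpace.single k 1) := by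
    intro k l
    have hd : DifferentiableAt ℝ (fderiv ℝ f) x :=
      ((hf.fderiv_right (m := 1) (by norm_num)).differentiable one_ne_zero) x
    have h2 := ((ContinuousLinearMap.apply ℝ ℝ
        (EuclideanSpace.single k 1)).hasFDerivAt.comp x hd.hasFDerivAt).fderiv
    have h3 : pdR N (pdR N f k) l x = (fderiv ℝ ((ContinuousLinearMap.apply ℝ ℝ
        (EuclideanSpace.single k 1)) ∘ (fderiv ℝ f)) x) (EuclideanSpace.single l 1) := rfl
    rw [h3, h2]; rfl
  rw [key i j, key j i]
  exact hsymm (EuclideanSpace.single j 1) (EuclideanSpace.single i 1)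

lemma pdR_coord (i : Fin N) (x : EuclideanSpace ℝ (Fin N)) :
    pdR N (fun y => y i) i x = 1 := by
  have h : (fun y : EuclideanSpace ℝ (Fin N) => y i) = (EuclideanSpace.proj i) := rfl
  simp only [pdR, h, ContinuousLinearMap.fderiv]
  simp


variable {N : ℕ}

lemma integrableOn_bounded {F : Type*} [NormedAddCommGroup F] {Ω : Set (EuclideanSpace ℝ (Fin N))}
    (hΩb : Bornology.IsBounded Ω) {f : EuclideanSpace ℝ (Fin N) → F} (hf : Continuous f) :
    IntegrableOn f Ω volume :=
  ((hf.continuousOn).integrableOn_compact hΩb.isCompact_closure).mono_set subset_closure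

lemma sum_pdR_coord (x : EuclideanSpace ℝ (Fin N)) :
    ∑ i : Fin N, pdR N (fun y => y i) i x = (N : ℝ) := by
  rw [Finset.sum_congr rfl fun i _ => pdR_coord i x]
  simp

lemma integrable_boundary {Ω : Set (EuclideanSpace ℝ (Fin N))}
    (hΩo : IsOpen Ω) (hΩb : Bornology.IsBounded Ω)
    {ν : EuclideanSpace ℝ (Fin N) → EuclideanSpace ℝ (Fin N)}
    (hdiv : ∀ F : EuclideanSpace ℝ (Fin N) → (Fin N → ℝ), ContDiff ℝ 1 F →
      ∫ x in Ω, ∑ i : Fin N, pdR N (fun y => F y i) i x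
        = ∫ x in frontier Ω, ∑ i : Fin N, ν x i * F x i ∂(μH[((N : ℝ) - 1)]))
    (hne : Ω.Nonempty) (hN : N ≠ 0)
    (F : EuclideanSpace ℝ (Fin N) → (Fin N → ℝ)) (hF : ContDiff ℝ 1 F) :
    IntegrableOn (fun x => ∑ i : Fin N, ν x i * F x i) (frontier Ω) (μH[((N : ℝ) - 1)]) := by
  have hvol0 : volume Ω ≠ 0 := (hΩo.measure_pos volume hne).ne'
  have hvolt : volume Ω ≠ ⊤ := hΩb.measure_lt_top.ne
  have hF0 : ContDiff ℝ 1 (fun x : EuclideanSpace ℝ (Fin N) => (fun i => x i)) := by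
    apply contDiff_pi.2
    intro i
    exact (EuclideanSpace.proj (𝕜 := ℝ) i).contDiff
  have hc0 : ∫ x in Ω, ∑ i : Fin N, pdR N (fun y => y i) i x = (volume Ω).toReal * N := by
    rw [show (fun x => ∑ i : Fin N, pdR N (fun y => y i) i x)
        = fun _ => (N : ℝ) from funext fun x => sum_pdR_coord x]
    rw [setIntegral_const]
    simp [mul_comm, Measure.real]
  have hc0ne : (volume Ω).toReal * N ≠ 0 := by
    have : (volume Ω).toReal ≠ 0 := by
      simp [ENNReal.toReal_eq_zero_iff, hvol0, hvolt]
    positivity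
  -- step 1 : the field x ↦ x is integrable on the boundary
  have h1 : IntegrableOn (fun x => ∑ i : Fin N, ν x i * x i) (frontier Ω) (μH[((N : ℝ) - 1)]) := by
    by_contra h
    have h2 := hdiv _ hF0
    rw [integral_undef h] at h2
    rw [hc0] at h2
    exact hc0ne h2
  -- step 2
  by_contra h
  have h2 := hdiv F hF
  rw [integral_undef h] at h2
  have hF1 : ContDiff ℝ 1 (fun x : EuclideanSpace ℝ (Fin N) => (fun i => x i + F x i)) := by
    apply contDiff_pi.2
    intro i
    exact ((EuclideanSpace.proj (𝕜 := ℝ) i).contDiff).add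
      ((ContinuousLinearMap.proj (R := ℝ) (φ := fun _ : Fin N => ℝ) i).contDiff.comp hF)
  have h3 := hdiv _ hF1
  -- compute its divergence pointwise
  have hdFi : ∀ (i : Fin N) (x : EuclideanSpace ℝ (Fin N)),
      DifferentiableAt ℝ (fun y => F y i) x := by
    intro i x
    exact ((ContinuousLinearMap.proj (R := ℝ) (φ := fun _ : Fin N => ℝ) i).differentiable.comp
      (hF.differentiable one_ne_zero)) x
  have hdivpt : ∀ x, ∑ i : Fin N, pdR N (fun y => y i + F y i) i x
      = (N : ℝ) + ∑ i : Fin N, pdR N (fun y => F y i) i x := by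
    intro x
    have : ∀ i : Fin N, pdR N (fun y => y i + F y i) i x
        = pdR N (fun y => y i) i x + pdR N (fun y => F y i) i x := by
      intro i
      have hco : DifferentiableAt ℝ (fun y : EuclideanSpace ℝ (Fin N) => y i) x :=
        (EuclideanSpace.proj (𝕜 := ℝ) i).differentiableAt
      simp [pdR, fderiv_fun_add hco (hdFi i x)]
    rw [Finset.sum_congr rfl fun i _ => this i, Finset.sum_add_distrib,
      Finset.sum_congr rfl fun i _ => pdR_coord i x]
    simp
  have hdivcont : Continuous (fun x => ∑ i : Fin N, pdR N (fun y => F y i) i x) := by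
    apply continuous_finset_sum
    intro i _
    have hFi : ContDiff ℝ 1 (fun y => F y i) :=
      (ContinuousLinearMap.proj (R := ℝ) (φ := fun _ : Fin N => ℝ) i).contDiff.comp hF
    exact (ContinuousLinearMap.apply ℝ ℝ (EuclideanSpace.single i 1)).continuous.comp
      (hFi.continuous_fderiv one_ne_zero)
  have h4 : ∫ x in Ω, ∑ i : Fin N, pdR N (fun y => y i + F y i) i x
      = (volume Ω).toReal * N + ∫ x in Ω, ∑ i : Fin N, pdR N (fun y => F y i) i x := by
    rw [show (fun x => ∑ i : Fin N, pdR N (fun y => y i + F y i) i x)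
        = fun x => (N : ℝ) + ∑ i : Fin N, pdR N (fun y => F y i) i x from funext hdivpt]
    rw [integral_add (integrableOn_const (C := (N : ℝ)) hΩb.measure_lt_top.ne)
      (integrableOn_bounded hΩb hdivcont)]
    rw [setIntegral_const]
    simp [mul_comm, Measure.real]
  have h5 : ¬ IntegrableOn (fun x => ∑ i : Fin N, ν x i * (x i + F x i)) (frontier Ω)
      (μH[((N : ℝ) - 1)]) := by
    intro hint
    apply h
    have heq : (fun x => ∑ i : Fin N, ν x i * F x i)
        = fun x => (∑ i : Fin N, ν x i * (x i + F x i)) - ∑ i : Fin N, ν x i * x i := by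
      funext x
      rw [← Finset.sum_sub_distrib]
      congr 1
      funext i
      ring
    rw [heq]
    exact hint.sub h1
  rw [integral_undef h5] at h3
  rw [h4, h2] at h3
  simpa [hc0ne] using h3
lemma pdR_neg {f : EuclideanSpace ℝ (Fin N) → ℝ} (i : Fin N) (x : EuclideanSpace ℝ (Fin N)) :
    pdR N (fun y => -(f y)) i x = -(pdR N f i x) := by
  simp [pdR, fderiv_neg]

/-- a.e. on the boundary, the gradient of a `C²` function vanishing on the boundary is
parallel to `ν`. -/
lemma grad_parallel {Ω : Set (EuclideanSpace ℝ (Fin N))}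
    (hΩo : IsOpen Ω) (hΩb : Bornology.IsBounded Ω)
    {ν : EuclideanSpace ℝ (Fin N) → EuclideanSpace ℝ (Fin N)}
    (hdiv : ∀ F : EuclideanSpace ℝ (Fin N) → (Fin N → ℝ), ContDiff ℝ 1 F →
      ∫ x in Ω, ∑ i : Fin N, pdR N (fun y => F y i) i x
        = ∫ x in frontier Ω, ∑ i : Fin N, ν x i * F x i ∂(μH[((N : ℝ) - 1)]))
    (hne : Ω.Nonempty) (hN : N ≠ 0)
    (v : EuclideanSpace ℝ (Fin N) → ℝ) (hv : ContDiff ℝ 2 v)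
    (hv0 : ∀ x ∈ frontier Ω, v x = 0) (j k : Fin N) :
    ∀ᵐ x ∂((μH[((N : ℝ) - 1)]).restrict (frontier Ω)),
      ν x j * pdR N v k x = ν x k * pdR N v j x := by
  by_cases hjk : j = k
  · subst hjk; exact Filter.Eventually.of_forall fun x => rfl
  have hkj : ¬ k = j := fun h => hjk h.symm
  set μb := (μH[((N : ℝ) - 1)] : Measure (EuclideanSpace ℝ (Fin N)))
  set Fjk : EuclideanSpace ℝ (Fin N) → Fin N → ℝ := fun y i =>
    (if i = j then pdR N v k y else 0) - (if i = k then pdR N v j y else 0) with hFjk_def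
  have hvd : ∀ (l : Fin N), ContDiff ℝ 1 (pdR N v l) := fun l => contDiff_pdR hv l
  have hcomp : ∀ i : Fin N, (fun y => Fjk y i)
      = if i = j then pdR N v k else if i = k then (fun y => -(pdR N v j y))
        else (fun _ => (0:ℝ)) := by
    intro i
    funext y
    by_cases h1 : i = j
    · have h2 : ¬ i = k := fun h => hjk (h1 ▸ h ▸ rfl)
      simp [hFjk_def, h1, h2, hjk, hkj]
    · by_cases h2 : i = k <;> simp [hFjk_def, h1, h2, hjk, hkj]
  have hFjk : ContDiff ℝ 1 Fjk := by
    apply contDiff_pi.2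
    intro i
    rw [show (fun y => Fjk y i) = fun y => Fjk y i from rfl, hcomp i]
    split_ifs
    · exact hvd k
    · exact (hvd j).neg
    · exact contDiff_const
  have hsum : ∀ (w : EuclideanSpace ℝ (Fin N)) (g : Fin N → ℝ),
      ∑ i : Fin N, g i * Fjk w i = g j * pdR N v k w - g k * pdR N v j w := by
    intro w g
    simp only [hFjk_def, mul_sub, Finset.sum_sub_distrib, mul_ite, mul_zero]
    rw [Finset.sum_ite_eq' Finset.univ j (fun i => g i * pdR N v k w),
      Finset.sum_ite_eq' Finset.univ k (fun i => g i * pdR N v j w)]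
    simp
  set β : EuclideanSpace ℝ (Fin N) → ℝ :=
    fun x => ν x j * pdR N v k x - ν x k * pdR N v j x with hβ_def
  have hβae : ∀ᵐ x ∂(μb.restrict (frontier Ω)), β x = 0 := by
    apply ae_eq_zero_of_integral_contDiff_smul_eq_zero
    · -- locally integrable
      apply Integrable.locallyIntegrable
      have h0 := integrable_boundary hΩo hΩb hdiv hne hN Fjk hFjk
      have heq2 : (fun x => ∑ i : Fin N, ν x i * Fjk x i) = β := by
        funext x; rw [hsum x (fun i => ν x i)]
      rwa [IntegrableOn, heq2] at h0
    · intro g hg hgsupp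
      have hle2 : ((2:ℕ) : WithTop ℕ∞) ≤ (↑(⊤:ℕ∞) : WithTop ℕ∞) := by
        have h9 : ((2:ℕ∞) : WithTop ℕ∞) ≤ ((⊤:ℕ∞) : WithTop ℕ∞) := WithTop.coe_le_coe.mpr le_top
        simpa using h9
      have hg2 : ContDiff ℝ 2 g := hg.of_le hle2
      have hg1 : ContDiff ℝ 1 g := hg2.of_le one_le_two
      -- first divergence identity : ∫ g•β over boundary = ∫_Ω D
      have hd1 := hdiv (fun y i => g y * Fjk y i) (by
        apply contDiff_pi.2
        intro i
        exact hg1.mul ((ContinuousLinearMap.proj (R := ℝ) (φ := fun _ : Fin N => ℝ)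
          i).contDiff.comp hFjk))
      have hrhs : ∫ x in frontier Ω, ∑ i : Fin N, ν x i * (g x * Fjk x i) ∂μb
          = ∫ x, g x • β x ∂(μb.restrict (frontier Ω)) := by
        apply integral_congr_ae
        apply Filter.Eventually.of_forall
        intro x
        show ∑ i : Fin N, ν x i * (g x * Fjk x i) = g x • β x
        have heq3 : ∑ i : Fin N, ν x i * (g x * Fjk x i)
            = ∑ i : Fin N, (g x * ν x i) * Fjk x i := by
          congr 1; funext i; ring
        rw [heq3, hsum x (fun i => g x * ν x i)]
        simp only [hβ_def, smul_eq_mul]; ring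
      have hlhs : ∀ x, ∑ i : Fin N, pdR N (fun y => g y * Fjk y i) i x
          = pdR N g j x * pdR N v k x - pdR N g k x * pdR N v j x := by
        intro x
        have hterm : ∀ i : Fin N, pdR N (fun y => g y * Fjk y i) i x
            = pdR N g i x * Fjk x i + g x * pdR N (fun y => Fjk y i) i x := by
          intro i
          exact pdR_mul ((hg1.differentiable one_ne_zero) x)
            ((((ContinuousLinearMap.proj (R := ℝ) (φ := fun _ : Fin N => ℝ)
              i).contDiff.comp hFjk).differentiable one_ne_zero) x) i
        rw [Finset.sum_congr rfl fun i _ => hterm i, Finset.sum_add_distrib]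
        have e1 : ∑ i : Fin N, pdR N g i x * Fjk x i
            = pdR N g j x * pdR N v k x - pdR N g k x * pdR N v j x :=
          hsum x (fun i => pdR N g i x)
        have e2 : ∀ i : Fin N, pdR N (fun y => Fjk y i) i x
            = (if i = j then pdR N (pdR N v k) i x else 0)
              - (if i = k then pdR N (pdR N v j) i x else 0) := by
          intro i
          rw [hcomp i]
          by_cases h1 : i = j
          · have h2 : ¬ i = k := fun h => hjk (h1 ▸ h ▸ rfl)
            simp [h1, h2, hjk, hkj]
          · by_cases h2 : i = k
            · simp [h1, h2, hjk, hkj, pdR_neg]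
            · simp only [h1, h2, if_false]
              simp [pdR]
        have e3 : ∑ i : Fin N, g x * pdR N (fun y => Fjk y i) i x = 0 := by
          rw [← Finset.mul_sum]
          rw [Finset.sum_congr rfl fun i _ => e2 i]
          rw [Finset.sum_sub_distrib]
          rw [Finset.sum_ite_eq' Finset.univ j (fun i => pdR N (pdR N v k) i x),
            Finset.sum_ite_eq' Finset.univ k (fun i => pdR N (pdR N v j) i x)]
          simp only [Finset.mem_univ, if_true]
          rw [pdR_comm hv k j]
          simp
        rw [e1, e3, add_zero]
      -- second divergence identity : ∫_Ω D = boundary integral of terms containing v = 0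
      set H : EuclideanSpace ℝ (Fin N) → Fin N → ℝ := fun y i =>
        (if i = k then pdR N g j y * v y else 0) - (if i = j then pdR N g k y * v y else 0)
        with hH_def
      have hgd : ∀ l, ContDiff ℝ 1 (pdR N g l) := fun l => contDiff_pdR hg2 l
      have hv2 : ContDiff ℝ 1 v := hv.of_le (by norm_num)
      have hcompH : ∀ i : Fin N, (fun y => H y i)
          = if i = k then (fun y => pdR N g j y * v y)
            else if i = j then (fun y => -(pdR N g k y * v y)) else (fun _ => (0:ℝ)) := by
        intro i
        funext y
        by_cases h1 : i = k
        · have h2 : ¬ i = j := fun h => hjk (h ▸ h1 ▸ rfl)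
          simp [hH_def, h1, h2, hjk, hkj]
        · by_cases h2 : i = j <;> simp [hH_def, h1, h2, hjk, hkj]
      have hH : ContDiff ℝ 1 H := by
        apply contDiff_pi.2
        intro i
        rw [show (fun y => H y i) = fun y => H y i from rfl, hcompH i]
        split_ifs
        · exact (hgd j).mul hv2
        · exact ((hgd k).mul hv2).neg
        · exact contDiff_const
      have hd2 := hdiv H hH
      have hv1 : Differentiable ℝ v := hv.differentiable (by norm_num)
      have hHlhs : ∀ x, ∑ i : Fin N, pdR N (fun y => H y i) i x
          = pdR N g j x * pdR N v k x - pdR N g k x * pdR N v j x := by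
        intro x
        have e2 : ∀ i : Fin N, pdR N (fun y => H y i) i x
            = (if i = k then pdR N (pdR N g j) i x * v x + pdR N g j x * pdR N v i x else 0)
              - (if i = j then pdR N (pdR N g k) i x * v x + pdR N g k x * pdR N v i x
                  else 0) := by
          intro i
          rw [hcompH i]
          by_cases h1 : i = k
          · have h2 : ¬ i = j := fun h => hjk (h ▸ h1 ▸ rfl)
            simp only [h1, h2, hkj, if_true, if_false, reduceIte, sub_zero]
            exact pdR_mul ((hgd j).differentiable one_ne_zero x) (hv1 x) k
          · by_cases h2 : i = j
            · simp only [h1, h2, hjk, if_true, if_false, reduceIte, zero_sub]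
              rw [pdR_neg]
              rw [pdR_mul ((hgd k).differentiable one_ne_zero x) (hv1 x) j]
            · simp only [h1, h2, if_false, sub_zero]
              simp [pdR]
        rw [Finset.sum_congr rfl fun i _ => e2 i, Finset.sum_sub_distrib]
        rw [Finset.sum_ite_eq' Finset.univ k
            (fun i => pdR N (pdR N g j) i x * v x + pdR N g j x * pdR N v i x),
          Finset.sum_ite_eq' Finset.univ j
            (fun i => pdR N (pdR N g k) i x * v x + pdR N g k x * pdR N v i x)]
        simp only [Finset.mem_univ, if_true]
        rw [pdR_comm hg2 j k]
        ring
      have hHrhs : ∫ x in frontier Ω, ∑ i : Fin N, ν x i * H x i ∂μb = 0 := by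
        rw [setIntegral_congr_fun isClosed_frontier.measurableSet
          (g := fun _ => (0:ℝ)) ?_]
        · simp
        · intro x hx
          have hvx : v x = 0 := hv0 x hx
          simp [hH_def, hvx]
      rw [show (fun x => ∑ i : Fin N, pdR N (fun y => H y i) i x)
          = (fun x => pdR N g j x * pdR N v k x - pdR N g k x * pdR N v j x)
          from funext hHlhs, hHrhs] at hd2
      rw [show (fun x => ∑ i : Fin N, pdR N (fun y => g y * Fjk y i) i x)
          = (fun x => pdR N g j x * pdR N v k x - pdR N g k x * pdR N v j x)
          from funext hlhs, hd2] at hd1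
      rw [← hrhs, ← hd1]
  filter_upwards [hβae] with x hx
  have hx2 : ν x j * pdR N v k x - ν x k * pdR N v j x = 0 := hx
  linarith
/-- Key interior integration by parts identity. -/
lemma key_ibp {Ω : Set (EuclideanSpace ℝ (Fin N))} (hΩb : Bornology.IsBounded Ω)
    {ν : EuclideanSpace ℝ (Fin N) → EuclideanSpace ℝ (Fin N)}
    (hdiv : ∀ F : EuclideanSpace ℝ (Fin N) → (Fin N → ℝ), ContDiff ℝ 1 F →
      ∫ x in Ω, ∑ i : Fin N, pdR N (fun y => F y i) i x
        = ∫ x in frontier Ω, ∑ i : Fin N, ν x i * F x i ∂(μH[((N : ℝ) - 1)]))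
    (b : EuclideanSpace ℝ (Fin N) → ℝ) (hb : ContDiff ℝ 1 b)
    (φ : EuclideanSpace ℝ (Fin N) → ℝ) (hφ : ContDiff ℝ 2 φ)
    (v : EuclideanSpace ℝ (Fin N) → ℝ) (hv : ContDiff ℝ 2 v) (s : ℝ) :
    ∫ x in Ω, 2*s*b x*(∑ i : Fin N, pdR N φ i x * pdR N v i x)
        *(∑ i : Fin N, pdR N (pdR N v i) i x)
    = (∫ x in frontier Ω, ∑ j : Fin N, ν x j *
          (s * (b x * (2 * (∑ i : Fin N, pdR N φ i x * pdR N v i x) * pdR N v j x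
            - pdR N φ j x * (∑ i : Fin N, (pdR N v i x)^2)))) ∂(μH[((N : ℝ) - 1)]))
      - (∫ x in Ω, 2*s*(∑ i : Fin N, pdR N b i x * pdR N v i x)
          *(∑ i : Fin N, pdR N φ i x * pdR N v i x))
      + (∫ x in Ω, s*(∑ i : Fin N, pdR N b i x * pdR N φ i x)*(∑ i : Fin N, (pdR N v i x)^2))
      + (∫ x in Ω, s*b x*(∑ i : Fin N, pdR N (pdR N φ i) i x)*(∑ i : Fin N, (pdR N v i x)^2))
      - (∫ x in Ω, 2*s*b x*(∑ i : Fin N, ∑ j : Fin N,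
          pdR N (pdR N φ i) j x * pdR N v i x * pdR N v j x)) := by
  classical
  set p : EuclideanSpace ℝ (Fin N) → ℝ := fun y => ∑ i : Fin N, pdR N φ i y * pdR N v i y
    with hp_def
  set m : EuclideanSpace ℝ (Fin N) → ℝ := fun y => ∑ i : Fin N, (pdR N v i y)^2 with hm_def
  have hφ1 : ∀ i, ContDiff ℝ 1 (pdR N φ i) := fun i => contDiff_pdR hφ i
  have hv1 : ∀ i, ContDiff ℝ 1 (pdR N v i) := fun i => contDiff_pdR hv i
  have hpC : ContDiff ℝ 1 p := ContDiff.sum fun i _ => (hφ1 i).mul (hv1 i)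
  have hmC : ContDiff ℝ 1 m := ContDiff.sum fun i _ => (hv1 i).pow 2
  have hbd : ∀ x, DifferentiableAt ℝ b x := fun x => (hb.differentiable one_ne_zero) x
  have hpd : ∀ x, DifferentiableAt ℝ p x := fun x => (hpC.differentiable one_ne_zero) x
  have hmd : ∀ x, DifferentiableAt ℝ m x := fun x => (hmC.differentiable one_ne_zero) x
  have hφd : ∀ i x, DifferentiableAt ℝ (pdR N φ i) x :=
    fun i x => ((hφ1 i).differentiable one_ne_zero) x
  have hvd : ∀ i x, DifferentiableAt ℝ (pdR N v i) x :=
    fun i x => ((hv1 i).differentiable one_ne_zero) x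
  set F : EuclideanSpace ℝ (Fin N) → Fin N → ℝ :=
    fun y j => s * (b y * (2 * p y * pdR N v j y - pdR N φ j y * m y)) with hF_def
  have hGd : ∀ j x, DifferentiableAt ℝ (fun y => 2 * p y * pdR N v j y - pdR N φ j y * m y) x :=
    fun j x => (((hpd x).const_mul 2).mul (hvd j x)).sub ((hφd j x).mul (hmd x))
  have hFC : ContDiff ℝ 1 F := by
    apply contDiff_pi.2
    intro j
    exact contDiff_const.mul (hb.mul (((contDiff_const.mul hpC).mul (hv1 j)).sub
      ((hφ1 j).mul hmC)))
  have hdivF := hdiv F hFC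
  -- derivative of p
  have hpj : ∀ j x, pdR N p j x = (∑ i : Fin N, pdR N (pdR N φ i) j x * pdR N v i x)
      + (∑ i : Fin N, pdR N φ i x * pdR N (pdR N v i) j x) := by
    intro j x
    rw [hp_def]
    rw [pdR_sum Finset.univ (fun i _ => (hφd i x).fun_mul (hvd i x)) j]
    rw [← Finset.sum_add_distrib]
    exact Finset.sum_congr rfl fun i _ => pdR_mul (hφd i x) (hvd i x) j
  -- derivative of m
  have hmj : ∀ j x, pdR N m j x = 2 * ∑ i : Fin N, pdR N v i x * pdR N (pdR N v i) j x := by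
    intro j x
    have hsq : m = fun y => ∑ i : Fin N, pdR N v i y * pdR N v i y := by
      funext y
      exact Finset.sum_congr rfl fun i _ => sq (pdR N v i y)
    rw [hsq]
    rw [pdR_sum Finset.univ (fun i _ => (hvd i x).fun_mul (hvd i x)) j]
    rw [Finset.mul_sum]
    refine Finset.sum_congr rfl fun i _ => ?_
    rw [pdR_mul (hvd i x) (hvd i x) j]
    try ring
  -- pointwise divergence of F
  have hstep : ∀ j x, pdR N (fun y => F y j) j x
      = s * (pdR N b j x * (2 * p x * pdR N v j x - pdR N φ j x * m x)
        + b x * (2 * pdR N p j x * pdR N v j x + 2 * p x * pdR N (pdR N v j) j x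
          - (pdR N (pdR N φ j) j x * m x + pdR N φ j x * pdR N m j x))) := by
    intro j x
    have h1 : (fun y => F y j)
        = fun y => s * (b y * (2 * p y * pdR N v j y - pdR N φ j y * m y)) := rfl
    rw [h1, pdR_const_mul ((hbd x).fun_mul (hGd j x)) s j, pdR_mul (hbd x) (hGd j x) j,
      pdR_sub (((hpd x).const_mul 2).fun_mul (hvd j x)) ((hφd j x).fun_mul (hmd x)) j,
      pdR_mul ((hpd x).const_mul 2) (hvd j x) j, pdR_mul (hφd j x) (hmd x) j,
      pdR_const_mul (hpd x) 2 j]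
    try ring
  -- total pointwise divergence
  have hdivpt : ∀ x, (∑ j : Fin N, pdR N (fun y => F y j) j x) =
      2*s*(∑ i : Fin N, pdR N b i x * pdR N v i x)*(∑ i : Fin N, pdR N φ i x * pdR N v i x)
      + 2*s*b x*(∑ i : Fin N, ∑ j : Fin N, pdR N (pdR N φ i) j x * pdR N v i x * pdR N v j x)
      + 2*s*b x*(∑ i : Fin N, pdR N φ i x * pdR N v i x)
          *(∑ i : Fin N, pdR N (pdR N v i) i x)
      - s*(∑ i : Fin N, pdR N b i x * pdR N φ i x)*(∑ i : Fin N, (pdR N v i x)^2)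
      - s*b x*(∑ i : Fin N, pdR N (pdR N φ i) i x)*(∑ i : Fin N, (pdR N v i x)^2) := by
    intro x
    rw [Finset.sum_congr rfl (fun j _ => by rw [hstep j x, hpj j x, hmj j x])]
    -- split each summand into a cancelling part and a main part
    have hsplit : ∀ j : Fin N,
        s * (pdR N b j x * (2 * p x * pdR N v j x - pdR N φ j x * m x)
          + b x * (2 * ((∑ i : Fin N, pdR N (pdR N φ i) j x * pdR N v i x)
              + (∑ i : Fin N, pdR N φ i x * pdR N (pdR N v i) j x)) * pdR N v j x
            + 2 * p x * pdR N (pdR N v j) j x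
            - (pdR N (pdR N φ j) j x * m x
              + pdR N φ j x * (2 * ∑ i : Fin N, pdR N v i x * pdR N (pdR N v i) j x))))
        = (2*s*b x*((∑ i : Fin N, pdR N φ i x * pdR N (pdR N v i) j x) * pdR N v j x)
            - 2*s*b x*(pdR N φ j x * (∑ i : Fin N, pdR N v i x * pdR N (pdR N v i) j x)))
          + (2*s*p x*(pdR N b j x * pdR N v j x)
            + 2*s*b x*((∑ i : Fin N, pdR N (pdR N φ i) j x * pdR N v i x) * pdR N v j x)
            + 2*s*b x*p x*(pdR N (pdR N v j) j x)
            - s*m x*(pdR N b j x * pdR N φ j x)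
            - s*b x*m x*(pdR N (pdR N φ j) j x)) := by
      intro j
      ring
    rw [Finset.sum_congr rfl (fun j _ => hsplit j)]
    rw [Finset.sum_add_distrib]
    -- the cancelling part sums to zero (Schwarz)
    have hcancel : ∑ j : Fin N,
        (2*s*b x*((∑ i : Fin N, pdR N φ i x * pdR N (pdR N v i) j x) * pdR N v j x)
          - 2*s*b x*(pdR N φ j x * (∑ i : Fin N, pdR N v i x * pdR N (pdR N v i) j x)))
        = 0 := by
      rw [Finset.sum_sub_distrib]
      rw [sub_eq_zero]
      have e1 : ∀ j : Fin N,
          2*s*b x*((∑ i : Fin N, pdR N φ i x * pdR N (pdR N v i) j x) * pdR N v j x)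
          = ∑ i : Fin N, 2*s*b x*(pdR N φ i x * pdR N (pdR N v i) j x * pdR N v j x) := by
        intro j
        rw [Finset.sum_mul, Finset.mul_sum]
      have e2 : ∀ j : Fin N,
          2*s*b x*(pdR N φ j x * (∑ i : Fin N, pdR N v i x * pdR N (pdR N v i) j x))
          = ∑ i : Fin N, 2*s*b x*(pdR N φ j x * (pdR N v i x * pdR N (pdR N v i) j x)) := by
        intro j
        rw [Finset.mul_sum, Finset.mul_sum]
      rw [Finset.sum_congr rfl fun j _ => e1 j, Finset.sum_congr rfl fun j _ => e2 j]
      rw [Finset.sum_comm]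
      apply Finset.sum_congr rfl
      intro j _
      apply Finset.sum_congr rfl
      intro i _
      rw [pdR_comm hv i j x]
      ring
    rw [hcancel, zero_add]
    -- main part
    rw [Finset.sum_sub_distrib, Finset.sum_sub_distrib,
      Finset.sum_add_distrib, Finset.sum_add_distrib]
    rw [← Finset.mul_sum, ← Finset.mul_sum, ← Finset.mul_sum, ← Finset.mul_sum,
      ← Finset.mul_sum]
    have e3 : ∑ j : Fin N, (∑ i : Fin N, pdR N (pdR N φ i) j x * pdR N v i x) * pdR N v j x
        = ∑ i : Fin N, ∑ j : Fin N, pdR N (pdR N φ i) j x * pdR N v i x * pdR N v j x := by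
      rw [Finset.sum_comm]
      exact Finset.sum_congr rfl fun j _ => Finset.sum_mul ..
    rw [e3]
    rw [hp_def, hm_def]
    ring
  -- now the integral identity
  rw [show (fun x => ∑ j : Fin N, pdR N (fun y => F y j) j x)
      = fun x =>
      2*s*(∑ i : Fin N, pdR N b i x * pdR N v i x)*(∑ i : Fin N, pdR N φ i x * pdR N v i x)
      + 2*s*b x*(∑ i : Fin N, ∑ j : Fin N, pdR N (pdR N φ i) j x * pdR N v i x * pdR N v j x)
      + 2*s*b x*(∑ i : Fin N, pdR N φ i x * pdR N v i x)
          *(∑ i : Fin N, pdR N (pdR N v i) i x)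
      - s*(∑ i : Fin N, pdR N b i x * pdR N φ i x)*(∑ i : Fin N, (pdR N v i x)^2)
      - s*b x*(∑ i : Fin N, pdR N (pdR N φ i) i x)*(∑ i : Fin N, (pdR N v i x)^2)
      from funext hdivpt] at hdivF
  -- continuity of the five pieces
  have hbc : Continuous b := hb.continuous
  have cA1 : Continuous (fun x => 2*s*(∑ i : Fin N, pdR N b i x * pdR N v i x)
      *(∑ i : Fin N, pdR N φ i x * pdR N v i x)) := by
    apply Continuous.mul
    apply Continuous.mul
    · exact continuous_const
    · exact continuous_finset_sum _ fun i _ =>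
        (continuous_pdR hb i).mul (continuous_pdR (hv.of_le one_le_two) i)
    · exact continuous_finset_sum _ fun i _ =>
        (continuous_pdR (hφ.of_le one_le_two) i).mul (continuous_pdR (hv.of_le one_le_two) i)
  have cA2 : Continuous (fun x => 2*s*b x*(∑ i : Fin N, ∑ j : Fin N,
      pdR N (pdR N φ i) j x * pdR N v i x * pdR N v j x)) := by
    apply Continuous.mul
    · exact continuous_const.mul hbc
    · exact continuous_finset_sum _ fun i _ => continuous_finset_sum _ fun j _ =>
        ((continuous_pdR (hφ1 i) j).mul (continuous_pdR (hv.of_le one_le_two) i)).mul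
          (continuous_pdR (hv.of_le one_le_two) j)
  have cL : Continuous (fun x => 2*s*b x*(∑ i : Fin N, pdR N φ i x * pdR N v i x)
      *(∑ i : Fin N, pdR N (pdR N v i) i x)) := by
    apply Continuous.mul
    apply Continuous.mul
    · exact continuous_const.mul hbc
    · exact continuous_finset_sum _ fun i _ =>
        (continuous_pdR (hφ.of_le one_le_two) i).mul (continuous_pdR (hv.of_le one_le_two) i)
    · exact continuous_finset_sum _ fun i _ => continuous_pdR (hv1 i) i
  have cA3 : Continuous (fun x => s*(∑ i : Fin N, pdR N b i x * pdR N φ i x)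
      *(∑ i : Fin N, (pdR N v i x)^2)) := by
    apply Continuous.mul
    apply Continuous.mul
    · exact continuous_const
    · exact continuous_finset_sum _ fun i _ =>
        (continuous_pdR hb i).mul (continuous_pdR (hφ.of_le one_le_two) i)
    · exact continuous_finset_sum _ fun i _ => (continuous_pdR (hv.of_le one_le_two) i).pow 2
  have cA4 : Continuous (fun x => s*b x*(∑ i : Fin N, pdR N (pdR N φ i) i x)
      *(∑ i : Fin N, (pdR N v i x)^2)) := by
    apply Continuous.mul
    apply Continuous.mul
    · exact continuous_const.mul hbc
    · exact continuous_finset_sum _ fun i _ => continuous_pdR (hφ1 i) i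
    · exact continuous_finset_sum _ fun i _ => (continuous_pdR (hv.of_le one_le_two) i).pow 2
  have iA1 := integrableOn_bounded hΩb cA1
  have iA2 := integrableOn_bounded hΩb cA2
  have iL := integrableOn_bounded hΩb cL
  have iA3 := integrableOn_bounded hΩb cA3
  have iA4 := integrableOn_bounded hΩb cA4
  have i12 : IntegrableOn (fun x =>
      2*s*(∑ i : Fin N, pdR N b i x * pdR N v i x)*(∑ i : Fin N, pdR N φ i x * pdR N v i x)
      + 2*s*b x*(∑ i : Fin N, ∑ j : Fin N, pdR N (pdR N φ i) j x * pdR N v i x * pdR N v j x))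
      Ω volume := iA1.add iA2
  have i12L : IntegrableOn (fun x =>
      2*s*(∑ i : Fin N, pdR N b i x * pdR N v i x)*(∑ i : Fin N, pdR N φ i x * pdR N v i x)
      + 2*s*b x*(∑ i : Fin N, ∑ j : Fin N, pdR N (pdR N φ i) j x * pdR N v i x * pdR N v j x)
      + 2*s*b x*(∑ i : Fin N, pdR N φ i x * pdR N v i x)
          *(∑ i : Fin N, pdR N (pdR N v i) i x)) Ω volume := i12.add iL
  have i123 : IntegrableOn (fun x =>
      2*s*(∑ i : Fin N, pdR N b i x * pdR N v i x)*(∑ i : Fin N, pdR N φ i x * pdR N v i x)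
      + 2*s*b x*(∑ i : Fin N, ∑ j : Fin N, pdR N (pdR N φ i) j x * pdR N v i x * pdR N v j x)
      + 2*s*b x*(∑ i : Fin N, pdR N φ i x * pdR N v i x)
          *(∑ i : Fin N, pdR N (pdR N v i) i x)
      - s*(∑ i : Fin N, pdR N b i x * pdR N φ i x)*(∑ i : Fin N, (pdR N v i x)^2))
      Ω volume := i12L.sub iA3
  rw [integral_sub i123 iA4, integral_sub i12L iA3, integral_add i12 iL,
    integral_add iA1 iA2] at hdivF
  simp only [hF_def, hp_def, hm_def] at hdivF
  linarith [hdivF]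

lemma re_helper1 (a : ℝ) (z ζ : ℂ) :
    (((a : ℝ) : ℂ) * z * (starRingEnd ℂ) ζ).re = a * (z.re * ζ.re + z.im * ζ.im) := by
  simp [Complex.mul_re, Complex.mul_im, Complex.conj_re, Complex.conj_im]
  ring

lemma re_helper2 (a : ℝ) (z ζ : ℂ) :
    (((a : ℝ) : ℂ) * z * ζ).re = a * (z.re * ζ.re - z.im * ζ.im) := by
  simp [Complex.mul_re, Complex.mul_im]
  ring

lemma bdry_alg (νl V Φ : Fin N → ℝ) (c : ℝ) (hn : ∑ i : Fin N, (νl i)^2 = 1)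
    (hB : ∀ j k, νl j * V k = νl k * V j) :
    ∑ j : Fin N, νl j * (c * (2 * (∑ i : Fin N, Φ i * V i) * V j
        - Φ j * (∑ i : Fin N, (V i)^2)))
      = c * (∑ i : Fin N, νl i * Φ i) * (∑ i : Fin N, νl i * V i)^2 := by
  have hVk : ∀ k, V k = (∑ i : Fin N, νl i * V i) * νl k := by
    intro k
    have h1 : V k = ∑ i : Fin N, νl i * (νl i * V k) := by
      have h0 : ∑ i : Fin N, νl i * (νl i * V k) = (∑ i : Fin N, (νl i)^2) * V k := by
        rw [Finset.sum_mul]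
        exact Finset.sum_congr rfl fun i _ => by ring
      rw [h0, hn, one_mul]
    have h2 : ∑ i : Fin N, νl i * (νl i * V k) = ∑ i : Fin N, (νl i * V i) * νl k :=
      Finset.sum_congr rfl fun i _ => by rw [hB i k]; ring
    rw [h1, h2, ← Finset.sum_mul]
  have h1 : ∑ i : Fin N, Φ i * V i = (∑ i : Fin N, νl i * Φ i) * (∑ i : Fin N, νl i * V i) := by
    have : ∑ i : Fin N, Φ i * V i
        = ∑ i : Fin N, (νl i * Φ i) * (∑ l : Fin N, νl l * V l) := by
      refine Finset.sum_congr rfl fun i _ => ?_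
      rw [hVk i]; ring
    rw [this, ← Finset.sum_mul]
    try ring
  have h2 : ∑ i : Fin N, (V i)^2 = (∑ i : Fin N, νl i * V i)^2 := by
    have : ∑ i : Fin N, (V i)^2
        = ∑ i : Fin N, (∑ l : Fin N, νl l * V l)^2 * (νl i)^2 := by
      refine Finset.sum_congr rfl fun i _ => ?_
      rw [hVk i]; ring
    rw [this, ← Finset.mul_sum, hn, mul_one]
  have h3 : ∀ j : Fin N, νl j * (c * (2 * (∑ i : Fin N, Φ i * V i) * V j
        - Φ j * (∑ i : Fin N, (V i)^2)))
      = 2*c*(∑ i : Fin N, νl i * Φ i)*(∑ i : Fin N, νl i * V i)^2*((νl j)^2)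
        - c*(∑ i : Fin N, νl i * V i)^2*(νl j * Φ j) := by
    intro j
    rw [h1, h2, hVk j]
    ring
  rw [Finset.sum_congr rfl fun j _ => h3 j, Finset.sum_sub_distrib,
    ← Finset.mul_sum, ← Finset.mul_sum, hn]
  ring

end CarlemanAux
theorem stmt_16 (N : ℕ) (Ω : Set (EuclideanSpace ℝ (Fin N)))
    (hΩo : IsOpen Ω) (hΩb : Bornology.IsBounded Ω)
    (ν : EuclideanSpace ℝ (Fin N) → EuclideanSpace ℝ (Fin N))
    (hν : ∀ x ∈ frontier Ω, ‖ν x‖ = 1)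
    (hfin : μH[((N : ℝ) - 1)] (frontier Ω) < ⊤)
    -- `ν` is the outward unit normal of the smooth boundary: the divergence theorem holds.
    (hdiv : ∀ F : EuclideanSpace ℝ (Fin N) → (Fin N → ℝ), ContDiff ℝ 1 F →
      ∫ x in Ω, ∑ i : Fin N, pdR N (fun y => F y i) i x
        = ∫ x in frontier Ω, ∑ i : Fin N, ν x i * F x i ∂(μH[((N : ℝ) - 1)]))
    (u : EuclideanSpace ℝ (Fin N) → ℂ) (hu : ContDiff ℝ 2 u)
    (hu0 : ∀ x ∈ frontier Ω, u x = 0)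
    (φ : EuclideanSpace ℝ (Fin N) → ℝ) (hφ : ContDiff ℝ 2 φ)
    (σ : EuclideanSpace ℝ (Fin N) → ℝ) (hσ : ContDiff ℝ 1 σ) (s : ℝ) :
    (∫ x in Ω, 2 * (s : ℂ) * ((σ x : ℝ) : ℂ) ^ 2 * gradDotC N φ u x
        * (starRingEnd ℂ) (lapC N u x)).re
      = (∫ x in frontier Ω, s * σ x ^ 2 * (∑ i : Fin N, ν x i * pdR N φ i x)
            * ‖∑ i : Fin N, (ν x i : ℂ) * pdC N u i x‖ ^ 2 ∂(μH[((N : ℝ) - 1)]))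
        - (∫ x in Ω, 2 * (s : ℂ)
            * (∑ i : Fin N, (pdR N (fun y => σ y ^ 2) i x : ℂ) * (starRingEnd ℂ) (pdC N u i x))
            * gradDotC N φ u x).re
        + (∫ x in Ω, s * (∑ i : Fin N, pdR N (fun y => σ y ^ 2) i x * pdR N φ i x)
            * gradNormSqC N u x)
        + (∫ x in Ω, s * σ x ^ 2 * lapR N φ x * gradNormSqC N u x)
        - (∫ x in Ω, 2 * (s : ℂ) * ((σ x : ℝ) : ℂ) ^ 2
            * ∑ i : Fin N, ∑ j : Fin N,
                (pdR N (pdR N φ i) j x : ℂ) * pdC N u i x * (starRingEnd ℂ) (pdC N u j x)).re := by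
  classical
  rcases Nat.eq_zero_or_pos N with hN0 | hNpos
  · subst hN0
    simp [gradDotC, lapC, lapR, gradNormSqC]
  rcases Set.eq_empty_or_nonempty Ω with hΩe | hne
  · simp [hΩe]
  have hN : N ≠ 0 := hNpos.ne'
  -- real and imaginary parts of u
  set v : EuclideanSpace ℝ (Fin N) → ℝ := fun y => (u y).re with hv_def
  set w : EuclideanSpace ℝ (Fin N) → ℝ := fun y => (u y).im with hw_def
  have hv : ContDiff ℝ 2 v := by
    have h : ContDiff ℝ 2 (⇑Complex.reCLM ∘ u) := Complex.reCLM.contDiff.comp hu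
    exact h
  have hw : ContDiff ℝ 2 w := by
    have h : ContDiff ℝ 2 (⇑Complex.imCLM ∘ u) := Complex.imCLM.contDiff.comp hu
    exact h
  have hv0 : ∀ x ∈ frontier Ω, v x = 0 := fun x hx => by
    show (u x).re = 0
    rw [hu0 x hx]; simp
  have hw0 : ∀ x ∈ frontier Ω, w x = 0 := fun x hx => by
    show (u x).im = 0
    rw [hu0 x hx]; simp
  have hud : ∀ x, DifferentiableAt ℝ u x := fun x => (hu.differentiable two_ne_zero) x
  have hu1 : ∀ i, ContDiff ℝ 1 (pdC N u i) := fun i => CarlemanAux.contDiff_pdC hu i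
  have hudC : ∀ i x, DifferentiableAt ℝ (pdC N u i) x :=
    fun i x => ((hu1 i).differentiable one_ne_zero) x
  have hre : ∀ (i : Fin N) x, (pdC N u i x).re = pdR N v i x :=
    fun i x => (CarlemanAux.pd_re (hud x) i).symm
  have him : ∀ (i : Fin N) x, (pdC N u i x).im = pdR N w i x :=
    fun i x => (CarlemanAux.pd_im (hud x) i).symm
  have hre2 : ∀ (i : Fin N) x, (pdC N (pdC N u i) i x).re = pdR N (pdR N v i) i x := by
    intro i x
    have hfun : pdR N v i = fun y => (pdC N u i y).re := funext fun y => (hre i y).symm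
    rw [hfun]
    exact (CarlemanAux.pd_re (hudC i x) i).symm
  have him2 : ∀ (i : Fin N) x, (pdC N (pdC N u i) i x).im = pdR N (pdR N w i) i x := by
    intro i x
    have hfun : pdR N w i = fun y => (pdC N u i y).im := funext fun y => (him i y).symm
    rw [hfun]
    exact (CarlemanAux.pd_im (hudC i x) i).symm
  -- smoothness / continuity toolkit
  have hb : ContDiff ℝ 1 (fun y => σ y ^ 2) := hσ.pow 2
  have hφ1 : ∀ i, ContDiff ℝ 1 (pdR N φ i) := fun i => CarlemanAux.contDiff_pdR hφ i
  have hv1 : ∀ i, ContDiff ℝ 1 (pdR N v i) := fun i => CarlemanAux.contDiff_pdR hv i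
  have hw1 : ∀ i, ContDiff ℝ 1 (pdR N w i) := fun i => CarlemanAux.contDiff_pdR hw i
  have cσ2 : Continuous (fun y => σ y ^ 2) := hb.continuous
  have cφi : ∀ i, Continuous (pdR N φ i) := fun i => (hφ1 i).continuous
  have cvi : ∀ i, Continuous (pdR N v i) := fun i => (hv1 i).continuous
  have cwi : ∀ i, Continuous (pdR N w i) := fun i => (hw1 i).continuous
  have cφij : ∀ i j, Continuous (pdR N (pdR N φ i) j) :=
    fun i j => CarlemanAux.continuous_pdR (hφ1 i) j
  have cvij : ∀ i j, Continuous (pdR N (pdR N v i) j) :=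
    fun i j => CarlemanAux.continuous_pdR (hv1 i) j
  have cwij : ∀ i j, Continuous (pdR N (pdR N w i) j) :=
    fun i j => CarlemanAux.continuous_pdR (hw1 i) j
  have cbi : ∀ i, Continuous (pdR N (fun y => σ y ^ 2) i) :=
    fun i => CarlemanAux.continuous_pdR hb i
  -- the two key identities
  have keyv : ∫ x in Ω, 2*s*σ x ^ 2*(∑ i : Fin N, pdR N φ i x * pdR N v i x)
        *(∑ i : Fin N, pdR N (pdR N v i) i x)
      = (∫ x in frontier Ω, ∑ j : Fin N, ν x j * (s * (σ x ^ 2 *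
            (2 * (∑ i : Fin N, pdR N φ i x * pdR N v i x) * pdR N v j x
              - pdR N φ j x * (∑ i : Fin N, (pdR N v i x)^2)))) ∂(μH[((N : ℝ) - 1)]))
        - (∫ x in Ω, 2*s*(∑ i : Fin N, pdR N (fun y => σ y ^ 2) i x * pdR N v i x)
            *(∑ i : Fin N, pdR N φ i x * pdR N v i x))
        + (∫ x in Ω, s*(∑ i : Fin N, pdR N (fun y => σ y ^ 2) i x * pdR N φ i x)
            *(∑ i : Fin N, (pdR N v i x)^2))
        + (∫ x in Ω, s*σ x ^ 2*(∑ i : Fin N, pdR N (pdR N φ i) i x)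
            *(∑ i : Fin N, (pdR N v i x)^2))
        - (∫ x in Ω, 2*s*σ x ^ 2*(∑ i : Fin N, ∑ j : Fin N,
            pdR N (pdR N φ i) j x * pdR N v i x * pdR N v j x)) :=
    CarlemanAux.key_ibp hΩb hdiv (fun y => σ y ^ 2) hb φ hφ v hv s
  have keyw : ∫ x in Ω, 2*s*σ x ^ 2*(∑ i : Fin N, pdR N φ i x * pdR N w i x)
        *(∑ i : Fin N, pdR N (pdR N w i) i x)
      = (∫ x in frontier Ω, ∑ j : Fin N, ν x j * (s * (σ x ^ 2 *
            (2 * (∑ i : Fin N, pdR N φ i x * pdR N w i x) * pdR N w j x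
              - pdR N φ j x * (∑ i : Fin N, (pdR N w i x)^2)))) ∂(μH[((N : ℝ) - 1)]))
        - (∫ x in Ω, 2*s*(∑ i : Fin N, pdR N (fun y => σ y ^ 2) i x * pdR N w i x)
            *(∑ i : Fin N, pdR N φ i x * pdR N w i x))
        + (∫ x in Ω, s*(∑ i : Fin N, pdR N (fun y => σ y ^ 2) i x * pdR N φ i x)
            *(∑ i : Fin N, (pdR N w i x)^2))
        + (∫ x in Ω, s*σ x ^ 2*(∑ i : Fin N, pdR N (pdR N φ i) i x)
            *(∑ i : Fin N, (pdR N w i x)^2))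
        - (∫ x in Ω, 2*s*σ x ^ 2*(∑ i : Fin N, ∑ j : Fin N,
            pdR N (pdR N φ i) j x * pdR N w i x * pdR N w j x)) :=
    CarlemanAux.key_ibp hΩb hdiv (fun y => σ y ^ 2) hb φ hφ w hw s
  -- boundary integrability of the two flux fields
  have hFvC : ContDiff ℝ 1 (fun (y : EuclideanSpace ℝ (Fin N)) (j : Fin N) =>
      s * (σ y ^ 2 * (2 * (∑ i : Fin N, pdR N φ i y * pdR N v i y) * pdR N v j y
        - pdR N φ j y * (∑ i : Fin N, (pdR N v i y)^2)))) := by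
    apply contDiff_pi.2
    intro j
    exact contDiff_const.mul (hb.mul (((contDiff_const.mul
      (ContDiff.sum fun i _ => (hφ1 i).mul (hv1 i))).mul (hv1 j)).sub
      ((hφ1 j).mul (ContDiff.sum fun i _ => (hv1 i).pow 2))))
  have hFwC : ContDiff ℝ 1 (fun (y : EuclideanSpace ℝ (Fin N)) (j : Fin N) =>
      s * (σ y ^ 2 * (2 * (∑ i : Fin N, pdR N φ i y * pdR N w i y) * pdR N w j y
        - pdR N φ j y * (∑ i : Fin N, (pdR N w i y)^2)))) := by
    apply contDiff_pi.2
    intro j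
    exact contDiff_const.mul (hb.mul (((contDiff_const.mul
      (ContDiff.sum fun i _ => (hφ1 i).mul (hw1 i))).mul (hw1 j)).sub
      ((hφ1 j).mul (ContDiff.sum fun i _ => (hw1 i).pow 2))))
  have iBv : IntegrableOn (fun x => ∑ j : Fin N, ν x j * (s * (σ x ^ 2 *
      (2 * (∑ i : Fin N, pdR N φ i x * pdR N v i x) * pdR N v j x
        - pdR N φ j x * (∑ i : Fin N, (pdR N v i x)^2))))) (frontier Ω)
      (μH[((N : ℝ) - 1)]) :=
    CarlemanAux.integrable_boundary hΩo hΩb hdiv hne hN _ hFvC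
  have iBw : IntegrableOn (fun x => ∑ j : Fin N, ν x j * (s * (σ x ^ 2 *
      (2 * (∑ i : Fin N, pdR N φ i x * pdR N w i x) * pdR N w j x
        - pdR N φ j x * (∑ i : Fin N, (pdR N w i x)^2))))) (frontier Ω)
      (μH[((N : ℝ) - 1)]) :=
    CarlemanAux.integrable_boundary hΩo hΩb hdiv hne hN _ hFwC
  -- a.e. parallelism
  have haev : ∀ᵐ x ∂((μH[((N : ℝ) - 1)]).restrict (frontier Ω)),
      ∀ j k, ν x j * pdR N v k x = ν x k * pdR N v j x :=
    (MeasureTheory.ae_all_iff).2 fun j => (MeasureTheory.ae_all_iff).2 fun k =>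
      CarlemanAux.grad_parallel hΩo hΩb hdiv hne hN v hv hv0 j k
  have haew : ∀ᵐ x ∂((μH[((N : ℝ) - 1)]).restrict (frontier Ω)),
      ∀ j k, ν x j * pdR N w k x = ν x k * pdR N w j x :=
    (MeasureTheory.ae_all_iff).2 fun j => (MeasureTheory.ae_all_iff).2 fun k =>
      CarlemanAux.grad_parallel hΩo hΩb hdiv hne hN w hw hw0 j k
  have haemem : ∀ᵐ x ∂((μH[((N : ℝ) - 1)]).restrict (frontier Ω)), x ∈ frontier Ω :=
    MeasureTheory.ae_restrict_mem isClosed_frontier.measurableSet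
  -- boundary sum identity
  have hBsum : (∫ x in frontier Ω, ∑ j : Fin N, ν x j * (s * (σ x ^ 2 *
        (2 * (∑ i : Fin N, pdR N φ i x * pdR N v i x) * pdR N v j x
          - pdR N φ j x * (∑ i : Fin N, (pdR N v i x)^2)))) ∂(μH[((N : ℝ) - 1)]))
      + (∫ x in frontier Ω, ∑ j : Fin N, ν x j * (s * (σ x ^ 2 *
        (2 * (∑ i : Fin N, pdR N φ i x * pdR N w i x) * pdR N w j x
          - pdR N φ j x * (∑ i : Fin N, (pdR N w i x)^2)))) ∂(μH[((N : ℝ) - 1)]))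
      = ∫ x in frontier Ω, s * σ x ^ 2 * (∑ i : Fin N, ν x i * pdR N φ i x)
          * ‖∑ i : Fin N, (ν x i : ℂ) * pdC N u i x‖ ^ 2
          ∂(μH[((N : ℝ) - 1)]) := by
    rw [← integral_add iBv iBw]
    apply integral_congr_ae
    filter_upwards [haev, haew, haemem] with x hBv hBw hmem
    have hn1 : ∑ i : Fin N, (ν x i)^2 = 1 := by
      have h0 := hν x hmem
      rw [EuclideanSpace.norm_eq] at h0
      have h1 : ∑ i : Fin N, ‖ν x i‖ ^ 2 = 1 := Real.sqrt_eq_one.1 h0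
      simpa [Real.norm_eq_abs, sq_abs] using h1
    have ev := CarlemanAux.bdry_alg (fun i => ν x i) (fun i => pdR N v i x)
      (fun i => pdR N φ i x) (s * σ x ^ 2) hn1 hBv
    have ew := CarlemanAux.bdry_alg (fun i => ν x i) (fun i => pdR N w i x)
      (fun i => pdR N φ i x) (s * σ x ^ 2) hn1 hBw
    have habs : ‖∑ i : Fin N, (ν x i : ℂ) * pdC N u i x‖ ^ 2
        = (∑ i : Fin N, ν x i * pdR N v i x)^2 + (∑ i : Fin N, ν x i * pdR N w i x)^2 := by
      rw [Complex.sq_norm, Complex.normSq_apply]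
      have hzre : (∑ i : Fin N, (ν x i : ℂ) * pdC N u i x).re
          = ∑ i : Fin N, ν x i * pdR N v i x := by
        rw [Complex.re_sum]
        exact Finset.sum_congr rfl fun i _ => by rw [Complex.re_ofReal_mul, hre i x]
      have hzim : (∑ i : Fin N, (ν x i : ℂ) * pdC N u i x).im
          = ∑ i : Fin N, ν x i * pdR N w i x := by
        rw [Complex.im_sum]
        exact Finset.sum_congr rfl fun i _ => by rw [Complex.im_ofReal_mul, him i x]
      rw [hzre, hzim]
      ring
    show (∑ j : Fin N, ν x j * (s * (σ x ^ 2 *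
        (2 * (∑ i : Fin N, pdR N φ i x * pdR N v i x) * pdR N v j x
          - pdR N φ j x * (∑ i : Fin N, (pdR N v i x)^2)))))
      + (∑ j : Fin N, ν x j * (s * (σ x ^ 2 *
        (2 * (∑ i : Fin N, pdR N φ i x * pdR N w i x) * pdR N w j x
          - pdR N φ j x * (∑ i : Fin N, (pdR N w i x)^2)))))
      = s * σ x ^ 2 * (∑ i : Fin N, ν x i * pdR N φ i x)
          * ‖∑ i : Fin N, (ν x i : ℂ) * pdC N u i x‖ ^ 2
    have hv' : (∑ j : Fin N, ν x j * (s * (σ x ^ 2 *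
        (2 * (∑ i : Fin N, pdR N φ i x * pdR N v i x) * pdR N v j x
          - pdR N φ j x * (∑ i : Fin N, (pdR N v i x)^2)))))
        = ∑ j : Fin N, ν x j * ((s * σ x ^ 2) *
          (2 * (∑ i : Fin N, pdR N φ i x * pdR N v i x) * pdR N v j x
            - pdR N φ j x * (∑ i : Fin N, (pdR N v i x)^2))) :=
      Finset.sum_congr rfl fun j _ => by ring
    have hw' : (∑ j : Fin N, ν x j * (s * (σ x ^ 2 *
        (2 * (∑ i : Fin N, pdR N φ i x * pdR N w i x) * pdR N w j x
          - pdR N φ j x * (∑ i : Fin N, (pdR N w i x)^2)))))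
        = ∑ j : Fin N, ν x j * ((s * σ x ^ 2) *
          (2 * (∑ i : Fin N, pdR N φ i x * pdR N w i x) * pdR N w j x
            - pdR N φ j x * (∑ i : Fin N, (pdR N w i x)^2))) :=
      Finset.sum_congr rfl fun j _ => by ring
    rw [hv', hw', ev, ew, habs]
    ring
  -- pointwise real/imaginary computations
  have hgdre : ∀ x, (gradDotC N φ u x).re = ∑ i : Fin N, pdR N φ i x * pdR N v i x := by
    intro x
    simp only [gradDotC]
    rw [Complex.re_sum]
    exact Finset.sum_congr rfl fun i _ => by rw [Complex.re_ofReal_mul, hre i x]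
  have hgdim : ∀ x, (gradDotC N φ u x).im = ∑ i : Fin N, pdR N φ i x * pdR N w i x := by
    intro x
    simp only [gradDotC]
    rw [Complex.im_sum]
    exact Finset.sum_congr rfl fun i _ => by rw [Complex.im_ofReal_mul, him i x]
  have hlapre : ∀ x, (lapC N u x).re = ∑ i : Fin N, pdR N (pdR N v i) i x := by
    intro x
    simp only [lapC]
    rw [Complex.re_sum]
    exact Finset.sum_congr rfl fun i _ => hre2 i x
  have hlapim : ∀ x, (lapC N u x).im = ∑ i : Fin N, pdR N (pdR N w i) i x := by
    intro x
    simp only [lapC]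
    rw [Complex.im_sum]
    exact Finset.sum_congr rfl fun i _ => him2 i x
  have hgnorm : ∀ x, gradNormSqC N u x
      = (∑ i : Fin N, (pdR N v i x)^2) + (∑ i : Fin N, (pdR N w i x)^2) := by
    intro x
    simp only [gradNormSqC]
    rw [← Finset.sum_add_distrib]
    refine Finset.sum_congr rfl fun i _ => ?_
    rw [Complex.sq_norm, Complex.normSq_apply, hre i x, him i x]
    ring
  -- continuity of complex integrands
  have cu1 : ∀ i, Continuous (pdC N u i) :=
    fun i => CarlemanAux.continuous_pdC (hu.of_le one_le_two) i
  have cgd : Continuous (gradDotC N φ u) := by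
    show Continuous (fun x => ∑ i : Fin N, (pdR N φ i x : ℂ) * pdC N u i x)
    exact continuous_finset_sum _ fun i _ =>
      (Complex.continuous_ofReal.comp (cφi i)).mul (cu1 i)
  have clap : Continuous (lapC N u) := by
    show Continuous (fun x => ∑ i : Fin N, pdC N (pdC N u i) i x)
    exact continuous_finset_sum _ fun i _ => CarlemanAux.continuous_pdC (hu1 i) i
  have cσC : Continuous (fun x => ((σ x : ℝ) : ℂ)) := Complex.continuous_ofReal.comp hσ.continuous
  have cconj : Continuous (fun z : ℂ => (starRingEnd ℂ) z) := continuous_star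
  -- integrability of complex integrands
  have if1 : IntegrableOn (fun x => 2 * (s : ℂ) * ((σ x : ℝ) : ℂ) ^ 2 * gradDotC N φ u x
      * (starRingEnd ℂ) (lapC N u x)) Ω volume :=
    CarlemanAux.integrableOn_bounded hΩb (((continuous_const.mul (cσC.pow 2)).mul cgd).mul
      (cconj.comp clap))
  have if2 : IntegrableOn (fun x => 2 * (s : ℂ)
      * (∑ i : Fin N, (pdR N (fun y => σ y ^ 2) i x : ℂ) * (starRingEnd ℂ) (pdC N u i x))
      * gradDotC N φ u x) Ω volume :=
    CarlemanAux.integrableOn_bounded hΩb ((continuous_const.mul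
      (continuous_finset_sum _ fun i _ => (Complex.continuous_ofReal.comp (cbi i)).mul
        (cconj.comp (cu1 i)))).mul cgd)
  have if5 : IntegrableOn (fun x => 2 * (s : ℂ) * ((σ x : ℝ) : ℂ) ^ 2
      * ∑ i : Fin N, ∑ j : Fin N,
          (pdR N (pdR N φ i) j x : ℂ) * pdC N u i x * (starRingEnd ℂ) (pdC N u j x)) Ω volume :=
    CarlemanAux.integrableOn_bounded hΩb ((continuous_const.mul (cσC.pow 2)).mul
      (continuous_finset_sum _ fun i _ => continuous_finset_sum _ fun j _ =>
        (((Complex.continuous_ofReal.comp (cφij i j)).mul (cu1 i)).mul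
          (cconj.comp (cu1 j)))))
  -- integrability of the ten real integrands
  have iLv : IntegrableOn (fun x => 2*s*σ x ^ 2*(∑ i : Fin N, pdR N φ i x * pdR N v i x)
      *(∑ i : Fin N, pdR N (pdR N v i) i x)) Ω volume :=
    CarlemanAux.integrableOn_bounded hΩb (((continuous_const.mul cσ2).mul
      (continuous_finset_sum _ fun i _ => (cφi i).mul (cvi i))).mul
      (continuous_finset_sum _ fun i _ => cvij i i))
  have iLw : IntegrableOn (fun x => 2*s*σ x ^ 2*(∑ i : Fin N, pdR N φ i x * pdR N w i x)
      *(∑ i : Fin N, pdR N (pdR N w i) i x)) Ω volume :=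
    CarlemanAux.integrableOn_bounded hΩb (((continuous_const.mul cσ2).mul
      (continuous_finset_sum _ fun i _ => (cφi i).mul (cwi i))).mul
      (continuous_finset_sum _ fun i _ => cwij i i))
  have iA1v : IntegrableOn (fun x => 2*s*(∑ i : Fin N,
      pdR N (fun y => σ y ^ 2) i x * pdR N v i x)
      *(∑ i : Fin N, pdR N φ i x * pdR N v i x)) Ω volume :=
    CarlemanAux.integrableOn_bounded hΩb ((continuous_const.mul
      (continuous_finset_sum _ fun i _ => (cbi i).mul (cvi i))).mul
      (continuous_finset_sum _ fun i _ => (cφi i).mul (cvi i)))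
  have iA1w : IntegrableOn (fun x => 2*s*(∑ i : Fin N,
      pdR N (fun y => σ y ^ 2) i x * pdR N w i x)
      *(∑ i : Fin N, pdR N φ i x * pdR N w i x)) Ω volume :=
    CarlemanAux.integrableOn_bounded hΩb ((continuous_const.mul
      (continuous_finset_sum _ fun i _ => (cbi i).mul (cwi i))).mul
      (continuous_finset_sum _ fun i _ => (cφi i).mul (cwi i)))
  have iA3v : IntegrableOn (fun x => s*(∑ i : Fin N,
      pdR N (fun y => σ y ^ 2) i x * pdR N φ i x)
      *(∑ i : Fin N, (pdR N v i x)^2)) Ω volume :=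
    CarlemanAux.integrableOn_bounded hΩb ((continuous_const.mul
      (continuous_finset_sum _ fun i _ => (cbi i).mul (cφi i))).mul
      (continuous_finset_sum _ fun i _ => (cvi i).pow 2))
  have iA3w : IntegrableOn (fun x => s*(∑ i : Fin N,
      pdR N (fun y => σ y ^ 2) i x * pdR N φ i x)
      *(∑ i : Fin N, (pdR N w i x)^2)) Ω volume :=
    CarlemanAux.integrableOn_bounded hΩb ((continuous_const.mul
      (continuous_finset_sum _ fun i _ => (cbi i).mul (cφi i))).mul
      (continuous_finset_sum _ fun i _ => (cwi i).pow 2))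
  have iA4v : IntegrableOn (fun x => s*σ x ^ 2*(∑ i : Fin N, pdR N (pdR N φ i) i x)
      *(∑ i : Fin N, (pdR N v i x)^2)) Ω volume :=
    CarlemanAux.integrableOn_bounded hΩb (((continuous_const.mul cσ2).mul
      (continuous_finset_sum _ fun i _ => cφij i i)).mul
      (continuous_finset_sum _ fun i _ => (cvi i).pow 2))
  have iA4w : IntegrableOn (fun x => s*σ x ^ 2*(∑ i : Fin N, pdR N (pdR N φ i) i x)
      *(∑ i : Fin N, (pdR N w i x)^2)) Ω volume :=
    CarlemanAux.integrableOn_bounded hΩb (((continuous_const.mul cσ2).mul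
      (continuous_finset_sum _ fun i _ => cφij i i)).mul
      (continuous_finset_sum _ fun i _ => (cwi i).pow 2))
  have iA2v : IntegrableOn (fun x => 2*s*σ x ^ 2*(∑ i : Fin N, ∑ j : Fin N,
      pdR N (pdR N φ i) j x * pdR N v i x * pdR N v j x)) Ω volume :=
    CarlemanAux.integrableOn_bounded hΩb ((continuous_const.mul cσ2).mul
      (continuous_finset_sum _ fun i _ => continuous_finset_sum _ fun j _ =>
        ((cφij i j).mul (cvi i)).mul (cvi j)))
  have iA2w : IntegrableOn (fun x => 2*s*σ x ^ 2*(∑ i : Fin N, ∑ j : Fin N,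
      pdR N (pdR N φ i) j x * pdR N w i x * pdR N w j x)) Ω volume :=
    CarlemanAux.integrableOn_bounded hΩb ((continuous_const.mul cσ2).mul
      (continuous_finset_sum _ fun i _ => continuous_finset_sum _ fun j _ =>
        ((cφij i j).mul (cwi i)).mul (cwi j)))
  -- conversion of the four complex/real integrals in the goal
  have hpt1 : ∀ x, (2 * (s : ℂ) * ((σ x : ℝ) : ℂ) ^ 2 * gradDotC N φ u x
      * (starRingEnd ℂ) (lapC N u x)).re
      = 2*s*σ x ^ 2*(∑ i : Fin N, pdR N φ i x * pdR N v i x)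
          *(∑ i : Fin N, pdR N (pdR N v i) i x)
        + 2*s*σ x ^ 2*(∑ i : Fin N, pdR N φ i x * pdR N w i x)
          *(∑ i : Fin N, pdR N (pdR N w i) i x) := by
    intro x
    have e : 2 * (s : ℂ) * ((σ x : ℝ) : ℂ) ^ 2 * gradDotC N φ u x
        * (starRingEnd ℂ) (lapC N u x)
        = ((2 * s * σ x ^ 2 : ℝ) : ℂ) * gradDotC N φ u x
          * (starRingEnd ℂ) (lapC N u x) := by
      push_cast
      ring
    rw [e, CarlemanAux.re_helper1, hgdre x, hgdim x, hlapre x, hlapim x]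
    ring
  have hpt2 : ∀ x, (2 * (s : ℂ)
      * (∑ i : Fin N, (pdR N (fun y => σ y ^ 2) i x : ℂ) * (starRingEnd ℂ) (pdC N u i x))
      * gradDotC N φ u x).re
      = 2*s*(∑ i : Fin N, pdR N (fun y => σ y ^ 2) i x * pdR N v i x)
          *(∑ i : Fin N, pdR N φ i x * pdR N v i x)
        + 2*s*(∑ i : Fin N, pdR N (fun y => σ y ^ 2) i x * pdR N w i x)
          *(∑ i : Fin N, pdR N φ i x * pdR N w i x) := by
    intro x
    have e : 2 * (s : ℂ)
        * (∑ i : Fin N, (pdR N (fun y => σ y ^ 2) i x : ℂ) * (starRingEnd ℂ) (pdC N u i x))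
        * gradDotC N φ u x
        = ((2 * s : ℝ) : ℂ)
          * (∑ i : Fin N, (pdR N (fun y => σ y ^ 2) i x : ℂ) * (starRingEnd ℂ) (pdC N u i x))
          * gradDotC N φ u x := by
      push_cast
      ring
    have hz2re : (∑ i : Fin N,
        (pdR N (fun y => σ y ^ 2) i x : ℂ) * (starRingEnd ℂ) (pdC N u i x)).re
        = ∑ i : Fin N, pdR N (fun y => σ y ^ 2) i x * pdR N v i x := by
      rw [Complex.re_sum]
      exact Finset.sum_congr rfl fun i _ => by
        rw [Complex.re_ofReal_mul, Complex.conj_re, hre i x]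
    have hz2im : (∑ i : Fin N,
        (pdR N (fun y => σ y ^ 2) i x : ℂ) * (starRingEnd ℂ) (pdC N u i x)).im
        = ∑ i : Fin N, -(pdR N (fun y => σ y ^ 2) i x * pdR N w i x) := by
      rw [Complex.im_sum]
      exact Finset.sum_congr rfl fun i _ => by
        rw [Complex.im_ofReal_mul, Complex.conj_im, him i x]
        ring
    rw [e, CarlemanAux.re_helper2, hz2re, hz2im, hgdre x, hgdim x, Finset.sum_neg_distrib]
    ring
  have hpt5 : ∀ x, (2 * (s : ℂ) * ((σ x : ℝ) : ℂ) ^ 2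
      * ∑ i : Fin N, ∑ j : Fin N,
          (pdR N (pdR N φ i) j x : ℂ) * pdC N u i x * (starRingEnd ℂ) (pdC N u j x)).re
      = 2*s*σ x ^ 2*(∑ i : Fin N, ∑ j : Fin N,
            pdR N (pdR N φ i) j x * pdR N v i x * pdR N v j x)
        + 2*s*σ x ^ 2*(∑ i : Fin N, ∑ j : Fin N,
            pdR N (pdR N φ i) j x * pdR N w i x * pdR N w j x) := by
    intro x
    have e : 2 * (s : ℂ) * ((σ x : ℝ) : ℂ) ^ 2
        * ∑ i : Fin N, ∑ j : Fin N,
            (pdR N (pdR N φ i) j x : ℂ) * pdC N u i x * (starRingEnd ℂ) (pdC N u j x)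
        = ((2 * s * σ x ^ 2 : ℝ) : ℂ) * ∑ i : Fin N, ∑ j : Fin N,
            (pdR N (pdR N φ i) j x : ℂ) * pdC N u i x * (starRingEnd ℂ) (pdC N u j x) := by
      push_cast
      ring
    rw [e, Complex.re_ofReal_mul]
    have hZ : (∑ i : Fin N, ∑ j : Fin N,
        (pdR N (pdR N φ i) j x : ℂ) * pdC N u i x * (starRingEnd ℂ) (pdC N u j x)).re
        = ∑ i : Fin N, ∑ j : Fin N, pdR N (pdR N φ i) j x
            * (pdR N v i x * pdR N v j x + pdR N w i x * pdR N w j x) := by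
      rw [Complex.re_sum]
      refine Finset.sum_congr rfl fun i _ => ?_
      rw [Complex.re_sum]
      refine Finset.sum_congr rfl fun j _ => ?_
      rw [CarlemanAux.re_helper1, hre i x, hre j x, him i x, him j x]
    rw [hZ]
    have hsplit : ∑ i : Fin N, ∑ j : Fin N, pdR N (pdR N φ i) j x
          * (pdR N v i x * pdR N v j x + pdR N w i x * pdR N w j x)
        = (∑ i : Fin N, ∑ j : Fin N, pdR N (pdR N φ i) j x * pdR N v i x * pdR N v j x)
          + (∑ i : Fin N, ∑ j : Fin N, pdR N (pdR N φ i) j x * pdR N w i x * pdR N w j x) := by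
      rw [← Finset.sum_add_distrib]
      refine Finset.sum_congr rfl fun i _ => ?_
      rw [← Finset.sum_add_distrib]
      refine Finset.sum_congr rfl fun j _ => ?_
      ring
    rw [hsplit]
    ring
  have hT1 : (∫ x in Ω, 2 * (s : ℂ) * ((σ x : ℝ) : ℂ) ^ 2 * gradDotC N φ u x
      * (starRingEnd ℂ) (lapC N u x)).re
      = (∫ x in Ω, 2*s*σ x ^ 2*(∑ i : Fin N, pdR N φ i x * pdR N v i x)
          *(∑ i : Fin N, pdR N (pdR N v i) i x))
        + (∫ x in Ω, 2*s*σ x ^ 2*(∑ i : Fin N, pdR N φ i x * pdR N w i x)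
          *(∑ i : Fin N, pdR N (pdR N w i) i x)) := by
    have h := integral_re (μ := volume.restrict Ω) if1
    simp only [RCLike.re_to_complex] at h
    rw [← h]
    have h2 : ∫ x in Ω, (2 * (s : ℂ) * ((σ x : ℝ) : ℂ) ^ 2 * gradDotC N φ u x
        * (starRingEnd ℂ) (lapC N u x)).re
        = ∫ x in Ω, (2*s*σ x ^ 2*(∑ i : Fin N, pdR N φ i x * pdR N v i x)
          *(∑ i : Fin N, pdR N (pdR N v i) i x)
        + 2*s*σ x ^ 2*(∑ i : Fin N, pdR N φ i x * pdR N w i x)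
          *(∑ i : Fin N, pdR N (pdR N w i) i x)) :=
      integral_congr_ae (Filter.Eventually.of_forall hpt1)
    rw [h2]
    exact integral_add iLv iLw
  have hT2 : (∫ x in Ω, 2 * (s : ℂ)
      * (∑ i : Fin N, (pdR N (fun y => σ y ^ 2) i x : ℂ) * (starRingEnd ℂ) (pdC N u i x))
      * gradDotC N φ u x).re
      = (∫ x in Ω, 2*s*(∑ i : Fin N, pdR N (fun y => σ y ^ 2) i x * pdR N v i x)
          *(∑ i : Fin N, pdR N φ i x * pdR N v i x))
        + (∫ x in Ω, 2*s*(∑ i : Fin N, pdR N (fun y => σ y ^ 2) i x * pdR N w i x)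
          *(∑ i : Fin N, pdR N φ i x * pdR N w i x)) := by
    have h := integral_re (μ := volume.restrict Ω) if2
    simp only [RCLike.re_to_complex] at h
    rw [← h]
    have h2 : ∫ x in Ω, (2 * (s : ℂ)
        * (∑ i : Fin N, (pdR N (fun y => σ y ^ 2) i x : ℂ) * (starRingEnd ℂ) (pdC N u i x))
        * gradDotC N φ u x).re
        = ∫ x in Ω, (2*s*(∑ i : Fin N, pdR N (fun y => σ y ^ 2) i x * pdR N v i x)
          *(∑ i : Fin N, pdR N φ i x * pdR N v i x)
        + 2*s*(∑ i : Fin N, pdR N (fun y => σ y ^ 2) i x * pdR N w i x)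
          *(∑ i : Fin N, pdR N φ i x * pdR N w i x)) :=
      integral_congr_ae (Filter.Eventually.of_forall hpt2)
    rw [h2]
    exact integral_add iA1v iA1w
  have hT5 : (∫ x in Ω, 2 * (s : ℂ) * ((σ x : ℝ) : ℂ) ^ 2
      * ∑ i : Fin N, ∑ j : Fin N,
          (pdR N (pdR N φ i) j x : ℂ) * pdC N u i x * (starRingEnd ℂ) (pdC N u j x)).re
      = (∫ x in Ω, 2*s*σ x ^ 2*(∑ i : Fin N, ∑ j : Fin N,
            pdR N (pdR N φ i) j x * pdR N v i x * pdR N v j x))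
        + (∫ x in Ω, 2*s*σ x ^ 2*(∑ i : Fin N, ∑ j : Fin N,
            pdR N (pdR N φ i) j x * pdR N w i x * pdR N w j x)) := by
    have h := integral_re (μ := volume.restrict Ω) if5
    simp only [RCLike.re_to_complex] at h
    rw [← h]
    have h2 : ∫ x in Ω, (2 * (s : ℂ) * ((σ x : ℝ) : ℂ) ^ 2
        * ∑ i : Fin N, ∑ j : Fin N,
            (pdR N (pdR N φ i) j x : ℂ) * pdC N u i x * (starRingEnd ℂ) (pdC N u j x)).re
        = ∫ x in Ω, (2*s*σ x ^ 2*(∑ i : Fin N, ∑ j : Fin N,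
            pdR N (pdR N φ i) j x * pdR N v i x * pdR N v j x)
        + 2*s*σ x ^ 2*(∑ i : Fin N, ∑ j : Fin N,
            pdR N (pdR N φ i) j x * pdR N w i x * pdR N w j x)) :=
      integral_congr_ae (Filter.Eventually.of_forall hpt5)
    rw [h2]
    exact integral_add iA2v iA2w
  have hT3 : (∫ x in Ω, s * (∑ i : Fin N, pdR N (fun y => σ y ^ 2) i x * pdR N φ i x)
      * gradNormSqC N u x)
      = (∫ x in Ω, s*(∑ i : Fin N, pdR N (fun y => σ y ^ 2) i x * pdR N φ i x)
          *(∑ i : Fin N, (pdR N v i x)^2))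
        + (∫ x in Ω, s*(∑ i : Fin N, pdR N (fun y => σ y ^ 2) i x * pdR N φ i x)
          *(∑ i : Fin N, (pdR N w i x)^2)) := by
    have h2 : ∫ x in Ω, (s * (∑ i : Fin N, pdR N (fun y => σ y ^ 2) i x * pdR N φ i x)
        * gradNormSqC N u x)
        = ∫ x in Ω, (s*(∑ i : Fin N, pdR N (fun y => σ y ^ 2) i x * pdR N φ i x)
          *(∑ i : Fin N, (pdR N v i x)^2)
        + s*(∑ i : Fin N, pdR N (fun y => σ y ^ 2) i x * pdR N φ i x)
          *(∑ i : Fin N, (pdR N w i x)^2)) :=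
      integral_congr_ae (Filter.Eventually.of_forall fun x => by
        show s * (∑ i : Fin N, pdR N (fun y => σ y ^ 2) i x * pdR N φ i x)
            * gradNormSqC N u x
          = s*(∑ i : Fin N, pdR N (fun y => σ y ^ 2) i x * pdR N φ i x)
              *(∑ i : Fin N, (pdR N v i x)^2)
            + s*(∑ i : Fin N, pdR N (fun y => σ y ^ 2) i x * pdR N φ i x)
              *(∑ i : Fin N, (pdR N w i x)^2)
        rw [hgnorm x]; ring)
    rw [h2]
    exact integral_add iA3v iA3w
  have hT4 : (∫ x in Ω, s * σ x ^ 2 * lapR N φ x * gradNormSqC N u x)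
      = (∫ x in Ω, s*σ x ^ 2*(∑ i : Fin N, pdR N (pdR N φ i) i x)
          *(∑ i : Fin N, (pdR N v i x)^2))
        + (∫ x in Ω, s*σ x ^ 2*(∑ i : Fin N, pdR N (pdR N φ i) i x)
          *(∑ i : Fin N, (pdR N w i x)^2)) := by
    have h2 : ∫ x in Ω, (s * σ x ^ 2 * lapR N φ x * gradNormSqC N u x)
        = ∫ x in Ω, (s*σ x ^ 2*(∑ i : Fin N, pdR N (pdR N φ i) i x)
          *(∑ i : Fin N, (pdR N v i x)^2)
        + s*σ x ^ 2*(∑ i : Fin N, pdR N (pdR N φ i) i x)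
          *(∑ i : Fin N, (pdR N w i x)^2)) :=
      integral_congr_ae (Filter.Eventually.of_forall fun x => by
        show s * σ x ^ 2 * lapR N φ x * gradNormSqC N u x
          = s*σ x ^ 2*(∑ i : Fin N, pdR N (pdR N φ i) i x)
              *(∑ i : Fin N, (pdR N v i x)^2)
            + s*σ x ^ 2*(∑ i : Fin N, pdR N (pdR N φ i) i x)
              *(∑ i : Fin N, (pdR N w i x)^2)
        simp only [lapR]
        rw [hgnorm x]
        ring)
    rw [h2]
    exact integral_add iA4v iA4w
  rw [hT1, hT2, hT3, hT4, hT5]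
  linarith [keyv, keyw, hBsum]
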